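/- arXiv:1602.03479 — 5 statements merged into one kernel-verified Lean document; each statement's English description precedes it below -/
import Mathlib

section
/- Let L be a finite-dimensional real Lie algebra whose Killing form κ is negative definite, and let C be a Cartan subalgebra of L. Then for every element x ∈ L there exists a Lie algebra automorphism g of L (a Lie algebra self-equivalence L ≃ L) such that g(x) lies in the orthogonal complement C⊥ of C, i.e. κ(g(x), c) = 0 for all c ∈ C. Equivalently, every element of L is orthogonal (with respect to κ) to some Cartan subalgebra of L. -/
set_option maxHeartbeats 1000000
set_option synthInstance.maxHeartbeats 400000


open scoped RealInnerProductSpace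

section InnerLemmas

variable {E : Type*} [NormedAddCommGroup E] [InnerProductSpace ℝ E]

lemma symm_pow_inner (T : E →ₗ[ℝ] E) (hs : ∀ v w : E, ⟪T v, w⟫ = ⟪v, T w⟫) (n : ℕ) :
    ∀ v w : E, ⟪(T ^ n) v, w⟫ = ⟪v, (T ^ n) w⟫ := by
  induction n with
  | zero => simp
  | succ n ih =>
    intro v w
    rw [pow_succ, Module.End.mul_apply, Module.End.mul_apply, ih, hs,
      ← Module.End.mul_apply, ← Module.End.mul_apply, ← pow_succ, ← pow_succ']

lemma symm_nilp_apply (T : E →ₗ[ℝ] E) (hs : ∀ v w : E, ⟪T v, w⟫ = ⟪v, T w⟫) :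
    ∀ n : ℕ, ∀ v : E, (T ^ (n + 1)) v = 0 → T v = 0 := by
  intro n
  induction n with
  | zero => intro v hv; simpa using hv
  | succ n ih =>
    intro v hv
    apply ih
    have h2 : (T ^ (2 * n + 2)) v = 0 := by
      have : (2 * n + 2) = n + (n + 2) := by ring
      rw [this, pow_add, Module.End.mul_apply, hv, map_zero]
    have : ⟪(T ^ (n + 1)) v, (T ^ (n + 1)) v⟫ = 0 := by
      rw [symm_pow_inner T hs, ← Module.End.mul_apply, ← pow_add]
      have : n + 1 + (n + 1) = 2 * n + 2 := by ring
      rw [this, h2, inner_zero_right]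
    exact inner_self_eq_zero.mp this

lemma skew_nilp_apply (T : E →ₗ[ℝ] E) (hsk : ∀ v w : E, ⟪T v, w⟫ = -⟪v, T w⟫)
    {n : ℕ} {v : E} (h : (T ^ n) v = 0) : T v = 0 := by
  rcases Nat.eq_zero_or_pos n with rfl | hn
  · simp only [pow_zero, Module.End.one_apply] at h
    rw [h, map_zero]
  · -- T ∘ T is symmetric and kills v after n iterations
    have hsymm : ∀ v w : E, ⟪(T * T) v, w⟫ = ⟪v, (T * T) w⟫ := by
      intro v w
      rw [Module.End.mul_apply, Module.End.mul_apply, hsk, hsk, neg_neg]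
    have hTn : ((T * T) ^ n) v = 0 := by
      have : (T * T) ^ n = T ^ n * T ^ n := (Commute.refl T).mul_pow n
      rw [this, Module.End.mul_apply, h, map_zero]
    obtain ⟨m, rfl⟩ := Nat.exists_eq_add_of_lt hn
    have hTT : (T * T) v = 0 := symm_nilp_apply (T * T) hsymm (0 + m) v (by simpa using hTn)
    have : ⟪T v, T v⟫ = 0 := by
      rw [hsk, ← Module.End.mul_apply, hTT, inner_zero_right, neg_zero]
    exact inner_self_eq_zero.mp this

lemma deriv2_nonneg_of_min {f h : ℝ → ℝ} {k : ℝ} (hf : ∀ s, HasDerivAt f (h s) s)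
    (hh : HasDerivAt h k 0) (hmin : ∀ s, f 0 ≤ f s) : h 0 = 0 ∧ 0 ≤ k := by
  have hloc : IsLocalMin f 0 := Filter.Eventually.of_forall hmin
  have h0 : h 0 = 0 := hloc.hasDerivAt_eq_zero (hf 0)
  refine ⟨h0, ?_⟩
  by_contra hk
  push_neg at hk
  have hslope : Filter.Tendsto (fun s => h s / s) (nhdsWithin 0 {(0:ℝ)}ᶜ) (nhds k) := by
    have := hasDerivAt_iff_tendsto_slope.mp hh
    refine this.congr (fun s => ?_)
    simp [slope_def_field, h0]
  have hev : ∀ᶠ s in nhdsWithin (0:ℝ) (Set.Ioi 0), h s / s < 0 := by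
    have h1 : ∀ᶠ s in nhdsWithin 0 {(0:ℝ)}ᶜ, h s / s < 0 :=
      hslope.eventually_lt_const hk
    exact h1.filter_mono (nhdsWithin_mono 0 (fun s hs => ne_of_gt hs))
  obtain ⟨δ, hδ, hsub⟩ := mem_nhdsGT_iff_exists_Ioo_subset.mp hev
  have hδ0 : (0:ℝ) < δ := hδ
  have hneg : ∀ s ∈ Set.Ioo (0:ℝ) δ, h s < 0 := by
    intro s hs
    have := hsub hs
    have hs0 : 0 < s := hs.1
    simpa [div_neg_iff, hs0, not_lt.mpr hs0.le] using this
    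
  have hanti : StrictAntiOn f (Set.Icc 0 δ) := by
    apply strictAntiOn_of_deriv_neg (convex_Icc 0 δ)
    · exact (Differentiable.continuous (fun s => (hf s).differentiableAt)).continuousOn
    · intro s hs
      rw [interior_Icc] at hs
      rw [(hf s).deriv]
      exact hneg s hs
  have h1 : f (δ / 2) < f 0 := by
    apply hanti (Set.left_mem_Icc.mpr hδ0.le) (Set.mem_Icc.mpr ⟨by positivity, by linarith⟩)
    positivity
  linarith [hmin (δ / 2)]

end InnerLemmas
section MinCond

open NormedSpace

variable {E : Type*} [NormedAddCommGroup E] [InnerProductSpace ℝ E] [FiniteDimensional ℝ E]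

lemma hasDerivAt_clm_comp {F G : Type*} [NormedAddCommGroup F] [NormedSpace ℝ F]
    [NormedAddCommGroup G] [NormedSpace ℝ G] (T : F →L[ℝ] G) {c : ℝ → F} {c' : F} {s : ℝ}
    (h : HasDerivAt c c' s) : HasDerivAt (fun t => T (c t)) (T c') s :=
  T.hasFDerivAt.comp_hasDerivAt s h

lemma exists_min_conditions (B : E →ₗ[ℝ] E →ₗ[ℝ] E)
    (hskew : ∀ z v w : E, ⟪B z v, w⟫ = -⟪v, B z w⟫)
    (hder : ∀ z v w : E, B z (B v w) = B (B z v) w + B v (B z w))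
    (V : Submodule ℝ E) (x : E) :
    ∃ f : E →L[ℝ] E, (∀ v w : E, ⟪f v, f w⟫ = ⟪v, w⟫) ∧
      (∀ v w : E, f (B v w) = B (f v) (f w)) ∧
      (∀ y : E, ⟪(V.orthogonalProjectionOnto (B y (f x)) : E),
          (V.orthogonalProjectionOnto (f x) : E)⟫ = 0) ∧
      (∀ y : E, 0 ≤ ⟪(V.orthogonalProjectionOnto (B y (B y (f x))) : E),
          (V.orthogonalProjectionOnto (f x) : E)⟫
        + ⟪(V.orthogonalProjectionOnto (B y (f x)) : E),
            (V.orthogonalProjectionOnto (B y (f x)) : E)⟫) := by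
  classical
  haveI : FiniteDimensional ℝ (E →L[ℝ] E) :=
    (LinearMap.toContinuousLinearMap : (E →ₗ[ℝ] E) ≃ₗ[ℝ] (E →L[ℝ] E)).finiteDimensional
  set Bc : E → (E →L[ℝ] E) := fun y => LinearMap.toContinuousLinearMap (B y) with hBcdef
  have hBc : ∀ y v : E, Bc y v = B y v := fun y v => rfl
  have hlin : IsLinearMap ℝ (fun z : E => Bc z) :=
    ⟨fun a b => by ext q; simp [hBc, map_add], fun t a => by ext q; simp [hBc, map_smul]⟩
  set BL : E →L[ℝ] (E →L[ℝ] E) := LinearMap.toContinuousLinearMap (IsLinearMap.mk' _ hlin)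
    with hBLdef
  have hBL : ∀ z : E, BL z = Bc z := fun z => rfl
  have hev : ∀ v : E, Continuous fun f : E →L[ℝ] E => f v :=
    fun v => continuous_id.clm_apply continuous_const
  let P : E →L[ℝ] E := V.subtypeL.comp V.orthogonalProjectionOnto
  have hP : ∀ v : E, P v = (V.orthogonalProjectionOnto v : E) := fun v => rfl
  -- the exponential family
  set Ey : E → ℝ → (E →L[ℝ] E) := fun y s => exp (s • Bc y) with hEydef
  have hE0 : ∀ y : E, Ey y 0 = 1 := by
    intro y; simp only [hEydef, zero_smul, exp_zero]
  have hEd : ∀ (y : E) (s : ℝ) (v : E),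
      HasDerivAt (fun t => Ey y t v) (Bc y (Ey y s v)) s := by
    intro y s v
    have h1 : HasDerivAt (fun t : ℝ => exp (t • Bc y)) (Bc y * exp (s • Bc y)) s :=
      hasDerivAt_exp_smul_const' (Bc y) s
    have h2 := h1.clm_apply (hasDerivAt_const s v)
    simpa [ContinuousLinearMap.mul_apply] using h2
  have hEnegCLM : ∀ (y : E) (s : ℝ),
      HasDerivAt (fun t : ℝ => Ey y (-t)) (-(exp ((-s) • Bc y) * Bc y)) s := by
    intro y s
    have h1 : HasDerivAt (fun t : ℝ => exp (t • Bc y)) (exp ((-s) • Bc y) * Bc y) (-s) :=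
      hasDerivAt_exp_smul_const (Bc y) (-s)
    have h2 := h1.scomp s (hasDerivAt_neg s)
    have h3 : HasDerivAt (fun t : ℝ => Ey y (-t)) ((-1:ℝ) • (exp ((-s) • Bc y) * Bc y)) s := h2
    simpa using h3
  have hEcancel : ∀ (y : E) (s : ℝ) (q : E), Ey y s (Ey y (-s) q) = q := by
    intro y s q
    have hmul1 : Ey y s * Ey y (-s) = 1 := by
      rw [hEydef]
      rw [← exp_add_of_commute_of_mem_ball (𝕂 := ℝ)
        (((Commute.refl (Bc y)).smul_left s).smul_right (-s))
        (by rw [expSeries_radius_eq_top]; exact edist_lt_top _ _)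
        (by rw [expSeries_radius_eq_top]; exact edist_lt_top _ _)]
      rw [← add_smul]
      simp
    have : Ey y s (Ey y (-s) q) = (Ey y s * Ey y (-s)) q := rfl
    rw [this, hmul1, ContinuousLinearMap.one_apply]
  -- exp is an automorphism of B
  have hElie : ∀ (y : E) (s : ℝ) (v w : E), Ey y s (B v w) = B (Ey y s v) (Ey y s w) := by
    intro y s₀ v w
    set g : ℝ → E := fun t => Ey y (-t) (B (Ey y t v) (Ey y t w)) with hgdef
    have hgd : ∀ s, HasDerivAt g 0 s := by
      intro s
      have hv := hEd y s v
      have hw := hEd y s w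
      have hbr : HasDerivAt (fun t => B (Ey y t v) (Ey y t w))
          (B (Bc y (Ey y s v)) (Ey y s w) + B (Ey y s v) (Bc y (Ey y s w))) s := by
        have hBL1 : HasDerivAt (fun t => BL (Ey y t v)) (BL (Bc y (Ey y s v))) s :=
          hasDerivAt_clm_comp BL hv
        have h2 := hBL1.clm_apply hw
        simpa [hBL, hBc] using h2
      have h3 := (hEnegCLM y s).clm_apply hbr
      have key : B (Bc y (Ey y s v)) (Ey y s w) + B (Ey y s v) (Bc y (Ey y s w))
          - Bc y (B (Ey y s v) (Ey y s w)) = 0 := by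
        simp only [hBc]
        rw [← hder y (Ey y s v) (Ey y s w)]
        exact sub_self _
      convert h3 using 1
      rw [ContinuousLinearMap.neg_apply, ContinuousLinearMap.mul_apply]
      rw [neg_add_eq_sub, ← map_sub]
      rw [key, map_zero]
    have hgc : g s₀ = g 0 :=
      is_const_of_deriv_eq_zero (fun s => (hgd s).differentiableAt)
        (fun s => (hgd s).deriv) s₀ 0
    have h00 : g 0 = B v w := by
      simp only [hgdef, neg_zero, hE0, ContinuousLinearMap.one_apply]
    have hBvw : B v w = Ey y (-s₀) (B (Ey y s₀ v) (Ey y s₀ w)) := (hgc.trans h00).symm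
    rw [hBvw, hEcancel]
  -- exp is an isometry
  have hEiso : ∀ (y : E) (s : ℝ) (v w : E), ⟪Ey y s v, Ey y s w⟫ = ⟪v, w⟫ := by
    intro y s₀ v w
    set g : ℝ → ℝ := fun t => ⟪Ey y t v, Ey y t w⟫ with hgdef
    have hgd : ∀ s, HasDerivAt g 0 s := by
      intro s
      have := (hEd y s v).inner ℝ (hEd y s w)
      refine this.congr_deriv ?_
      rw [hBc, hBc, hskew]
      ring
    have hgc : g s₀ = g 0 :=
      is_const_of_deriv_eq_zero (fun s => (hgd s).differentiableAt)
        (fun s => (hgd s).deriv) s₀ 0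
    have h00 : g 0 = ⟪v, w⟫ := by
      simp only [hgdef, hE0, ContinuousLinearMap.one_apply]
    exact hgc.trans h00
  -- the compact set of automorphisms
  set Kst : Set (E →L[ℝ] E) :=
    {f | (∀ v w : E, ⟪f v, f w⟫ = ⟪v, w⟫) ∧ (∀ v w : E, f (B v w) = B (f v) (f w))}
    with hKstdef
  have hid : (1 : E →L[ℝ] E) ∈ Kst := by
    constructor <;> intro v w <;> simp [ContinuousLinearMap.one_apply]
  have hcomp : ∀ {g h : E →L[ℝ] E}, g ∈ Kst → h ∈ Kst → g.comp h ∈ Kst := by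
    intro g h hg hh
    constructor
    · intro v w; simp only [ContinuousLinearMap.comp_apply, hg.1, hh.1]
    · intro v w; simp only [ContinuousLinearMap.comp_apply, hh.2, hg.2]
  have hEyK : ∀ (y : E) (s : ℝ), Ey y s ∈ Kst := fun y s => ⟨hEiso y s, hElie y s⟩
  have hclosed : IsClosed Kst := by
    have h1 : IsClosed {f : E →L[ℝ] E | ∀ v w : E, ⟪f v, f w⟫ = ⟪v, w⟫} := by
      have : {f : E →L[ℝ] E | ∀ v w : E, ⟪f v, f w⟫ = ⟪v, w⟫}
          = ⋂ (v : E) (w : E), {f : E →L[ℝ] E | ⟪f v, f w⟫ = ⟪v, w⟫} := by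
        ext f; simp [Set.mem_iInter]
      rw [this]
      exact isClosed_iInter fun v => isClosed_iInter fun w => isClosed_eq
        (Continuous.inner (hev v) (hev w)) continuous_const
    have h2 : IsClosed {f : E →L[ℝ] E | ∀ v w : E, f (B v w) = B (f v) (f w)} := by
      have : {f : E →L[ℝ] E | ∀ v w : E, f (B v w) = B (f v) (f w)}
          = ⋂ (v : E) (w : E), {f : E →L[ℝ] E | f (B v w) = B (f v) (f w)} := by
        ext f; simp [Set.mem_iInter]
      rw [this]
      refine isClosed_iInter fun v => isClosed_iInter fun w => isClosed_eq
        (hev (B v w)) ?_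
      have hc1 : Continuous fun f : E →L[ℝ] E => BL (f v) :=
        BL.continuous.comp (hev v)
      have := hc1.clm_apply (hev w)
      simpa [hBL, hBc] using this
    exact (h1.inter h2)
  have hbdd : Bornology.IsBounded Kst := by
    apply Bornology.IsBounded.subset (Metric.isBounded_closedBall (x := (0 : E →L[ℝ] E)) (r := 1))
    intro f hf
    rw [Metric.mem_closedBall, dist_zero_right]
    refine ContinuousLinearMap.opNorm_le_bound f zero_le_one (fun v => ?_)
    have h2 : ‖f v‖ ^ 2 = ‖v‖ ^ 2 := by
      have := hf.1 v v
      rwa [real_inner_self_eq_norm_sq, real_inner_self_eq_norm_sq] at this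
    nlinarith [norm_nonneg (f v), norm_nonneg v]
  have hcpt : IsCompact Kst := Metric.isCompact_of_isClosed_isBounded hclosed hbdd
  -- minimize
  set φ : E → ℝ := fun v => ⟪P v, P v⟫ with hφdef
  have hφc : Continuous φ := Continuous.inner P.continuous P.continuous
  have hSc : IsCompact ((fun f : E →L[ℝ] E => f x) '' Kst) :=
    hcpt.image (hev x)
  obtain ⟨u, huS, hminOn⟩ := hSc.exists_isMinOn ⟨x, ⟨1, hid, by simp⟩⟩ hφc.continuousOn
  obtain ⟨f₀, hf₀, hux0⟩ := huS
  have hux : f₀ x = u := hux0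
  have hmin : ∀ (y : E) (s : ℝ), φ u ≤ φ (Ey y s u) := by
    intro y s
    apply hminOn
    refine ⟨(Ey y s).comp f₀, hcomp (hEyK y s) hf₀, ?_⟩
    show (Ey y s).comp f₀ x = (Ey y s) u
    rw [ContinuousLinearMap.comp_apply, hux]
  -- derivative conditions at the minimum
  have hcond : ∀ y : E, ⟪P (B y u), P u⟫ = 0 ∧
      0 ≤ ⟪P (B y (B y u)), P u⟫ + ⟪P (B y u), P (B y u)⟫ := by
    intro y
    set c : ℝ → E := fun t => Ey y t u with hcdef
    have hc : ∀ s, HasDerivAt c (Bc y (c s)) s := fun s => hEd y s u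
    have hPc : ∀ s, HasDerivAt (fun t => P (c t)) (P (Bc y (c s))) s :=
      fun s => hasDerivAt_clm_comp P (hc s)
    have hPAc : ∀ s, HasDerivAt (fun t => P (Bc y (c t))) (P (Bc y (Bc y (c s)))) s :=
      fun s => hasDerivAt_clm_comp (P.comp (Bc y)) (hc s)
    set f : ℝ → ℝ := fun t => ⟪P (c t), P (c t)⟫ with hfdef
    set h : ℝ → ℝ := fun t => ⟪P (c t), P (Bc y (c t))⟫ + ⟪P (Bc y (c t)), P (c t)⟫
      with hhdef
    have hf : ∀ s, HasDerivAt f (h s) s := fun s => (hPc s).inner ℝ (hPc s)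
    have hh : HasDerivAt h
        ((⟪P (c 0), P (Bc y (Bc y (c 0)))⟫ + ⟪P (Bc y (c 0)), P (Bc y (c 0))⟫)
          + (⟪P (Bc y (c 0)), P (Bc y (c 0))⟫ + ⟪P (Bc y (Bc y (c 0))), P (c 0)⟫)) 0 :=
      ((hPc 0).inner ℝ (hPAc 0)).add ((hPAc 0).inner ℝ (hPc 0))
    have hminf : ∀ s, f 0 ≤ f s := by
      intro s
      have hc0 : c 0 = u := by rw [hcdef]; simp only [hE0, ContinuousLinearMap.one_apply]
      simp only [hfdef, hc0]
      exact hmin y s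
    obtain ⟨h0, hk⟩ := deriv2_nonneg_of_min hf hh hminf
    have hc0 : c 0 = u := by rw [hcdef]; simp only [hE0, ContinuousLinearMap.one_apply]
    rw [hhdef] at h0
    simp only [hc0, hBc] at h0 hk
    constructor
    · have := real_inner_comm (P (B y u)) (P u)
      linarith
    · have := real_inner_comm (P (B y (B y u))) (P u)
      linarith
  exact ⟨f₀, hf₀.1, hf₀.2, fun y => by rw [← hP, ← hP, hux]; exact (hcond y).1,
    fun y => by rw [← hP, ← hP, ← hP, hux]; exact (hcond y).2⟩

end MinCond
section Endgame

variable {E : Type*} [NormedAddCommGroup E] [InnerProductSpace ℝ E] [FiniteDimensional ℝ E]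

lemma endgame (B : E →ₗ[ℝ] E →ₗ[ℝ] E)
    (hskew : ∀ z v w : E, ⟪B z v, w⟫ = -⟪v, B z w⟫)
    (halt : ∀ v w : E, B v w = - B w v)
    (hder : ∀ z v w : E, B z (B v w) = B (B z v) w + B v (B z w))
    (htr : ∀ p q : E, ⟪p, q⟫ = - LinearMap.trace ℝ E ((B p) ∘ₗ (B q)))
    (V : Submodule ℝ E) (habV : ∀ v ∈ V, ∀ w ∈ V, B v w = 0)
    (u : E)
    (hfirst : ∀ y : E, ⟪(V.orthogonalProjectionOnto (B y u) : E),
        (V.orthogonalProjectionOnto u : E)⟫ = 0)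
    (hsecond : ∀ y : E, 0 ≤ ⟪(V.orthogonalProjectionOnto (B y (B y u)) : E),
        (V.orthogonalProjectionOnto u : E)⟫
      + ⟪(V.orthogonalProjectionOnto (B y u) : E), (V.orthogonalProjectionOnto (B y u) : E)⟫) :
    (V.orthogonalProjectionOnto u : E) = 0 := by
  classical
  set a : E := (V.orthogonalProjectionOnto u : E) with hadef
  have haV : a ∈ V := SetLike.coe_mem _
  have hadj : ∀ v w : E,
      ⟪(V.orthogonalProjectionOnto v : E), w⟫ = ⟪v, (V.orthogonalProjectionOnto w : E)⟫ :=
    fun v w => Submodule.inner_starProjection_left_eq_right V v w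
  have hPa : (V.orthogonalProjectionOnto a : E) = a := by
    have := Submodule.orthogonalProjectionOnto_mem_subspace_eq_self (K := V) ⟨a, haV⟩
    simpa using congrArg (fun z : V => (z : E)) this
  -- invariance of the trace form
  have hcommEnd : ∀ z v : E, B (B z v) = B z * B v - B v * B z := by
    intro z v
    ext w
    simp only [LinearMap.sub_apply, Module.End.mul_apply]
    rw [eq_sub_iff_add_eq]
    exact (hder z v w).symm
  have expand : ∀ f g h : Module.End ℝ E,
      LinearMap.trace ℝ E ((f * g - g * f) * h) = LinearMap.trace ℝ E (f * (g * h - h * g)) := by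
    intro f g h
    rw [sub_mul, mul_sub, map_sub, map_sub, mul_assoc]
    congr 1
    rw [mul_assoc, LinearMap.trace_mul_comm, mul_assoc]
  have hinv : ∀ p q r : E, ⟪B p q, r⟫ = ⟪p, B q r⟫ := by
    intro p q r
    rw [htr, htr, neg_inj, ← Module.End.mul_eq_comp, ← Module.End.mul_eq_comp,
      hcommEnd p q, hcommEnd q r]
    exact expand (B p) (B q) (B r)
  -- first-order condition
  have hBua : B u a = 0 := by
    have hy : ∀ y : E, ⟪y, B u a⟫ = 0 := by
      intro y
      calc ⟪y, B u a⟫ = ⟪B y u, a⟫ := (hinv y u a).symm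
        _ = ⟪B y u, (V.orthogonalProjectionOnto a : E)⟫ := by rw [hPa]
        _ = ⟪(V.orthogonalProjectionOnto (B y u) : E), a⟫ := (hadj (B y u) a).symm
        _ = 0 := hfirst y
    exact inner_self_eq_zero.mp (hy (B u a))
  have hBau : B a u = 0 := by rw [halt a u, hBua, neg_zero]
  set K : Submodule ℝ E := LinearMap.ker (B a) with hKdef
  have hVK : ∀ c ∈ V, c ∈ K := fun c hc => LinearMap.mem_ker.mpr (habV a haV c hc)
  have hKu : ∀ k ∈ K, B u k ∈ K := by
    intro k hk
    rw [LinearMap.mem_ker] at hk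
    rw [LinearMap.mem_ker, hder a u k, hBau, hk]
    simp
  have hortho : ∀ w : E, w ∈ Kᗮ → ∀ k ∈ K, ⟪w, k⟫ = 0 := by
    intro w hw k hk
    rw [real_inner_comm]
    exact (Submodule.mem_orthogonal K w).mp hw k hk
  have hBaKp : ∀ v : E, B a v ∈ Kᗮ := by
    intro v
    rw [Submodule.mem_orthogonal]
    intro k hk
    rw [real_inner_comm, hskew a v k, LinearMap.mem_ker.mp hk, inner_zero_right, neg_zero]
  have hBuKp : ∀ w ∈ Kᗮ, B u w ∈ Kᗮ := by
    intro w hw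
    rw [Submodule.mem_orthogonal]
    intro k hk
    rw [real_inner_comm, hskew u w k, hortho w hw (B u k) (hKu k hk), neg_zero]
  have hPBzero : ∀ y ∈ Kᗮ, (V.orthogonalProjectionOnto (B y u) : E) = 0 := by
    intro y hy
    have hmem : B y u ∈ Vᗮ := by
      rw [Submodule.mem_orthogonal]
      intro c hc
      rw [real_inner_comm, hinv y u c]
      exact hortho y hy (B u c) (hKu c (hVK c hc))
    have := Submodule.orthogonalProjectionOnto_eq_zero_iff (K := V).mpr hmem
    rw [this]
    rfl
  have hineq : ∀ y ∈ Kᗮ, ⟪B y u, B y a⟫ ≤ 0 := by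
    intro y hy
    have h2 := hsecond y
    rw [hPBzero y hy] at h2
    simp only [inner_zero_left, inner_zero_right, add_zero] at h2
    have h3 : ⟪(V.orthogonalProjectionOnto (B y (B y u)) : E), a⟫ = -⟪B y u, B y a⟫ := by
      rw [hadj, hPa]
      exact hskew y (B y u) a
    linarith [h2, h3]
  -- the trace computation
  set T : E →ₗ[ℝ] E := (B u) ∘ₗ (B a) with hTdef
  have hTmem : ∀ v : E, T v ∈ Kᗮ := fun v => hBuKp (B a v) (hBaKp v)
  have htrres : LinearMap.trace ℝ Kᗮ (T.restrict (fun v _ => hTmem v))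
      = LinearMap.trace ℝ E T :=
    LinearMap.trace_restrict_eq_of_forall_mem Kᗮ T hTmem _
  have htrnn : 0 ≤ LinearMap.trace ℝ E T := by
    rw [← htrres]
    set b := stdOrthonormalBasis ℝ (↥Kᗮ) with hbdef
    rw [LinearMap.trace_eq_matrix_trace ℝ b.toBasis, Matrix.trace]
    apply Finset.sum_nonneg
    intro i _
    rw [Matrix.diag_apply, LinearMap.toMatrix_apply, OrthonormalBasis.coe_toBasis_repr_apply,
      OrthonormalBasis.coe_toBasis, OrthonormalBasis.repr_apply_apply]
    have hcoe : (↑((T.restrict (fun v _ => hTmem v)) (b i)) : E) = T ((b i : E)) :=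
      LinearMap.restrict_coe_apply _ _ _
    rw [Submodule.coe_inner, hcoe]
    have he : ((b i : Kᗮ) : E) ∈ Kᗮ := SetLike.coe_mem _
    set e : E := ((b i : Kᗮ) : E) with hedef
    have h5 : ⟪e, T e⟫ = -⟪B a e, B u e⟫ := by
      rw [hTdef]
      simp only [LinearMap.comp_apply]
      rw [real_inner_comm]
      exact hskew u (B a e) e
    have h4 : ⟪B a e, B u e⟫ = ⟪B e u, B e a⟫ := by
      rw [halt a e, halt u e, inner_neg_neg, real_inner_comm]
    have h6 := hineq e he
    rw [h5, h4]
    linarith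
  have hua : ⟪u, a⟫ ≤ 0 := by
    rw [htr u a, ← hTdef]
    linarith
  have haa : ⟪a, a⟫ ≤ 0 := by
    have h7 : ⟪a, a⟫ = ⟪u, a⟫ := by
      calc ⟪a, a⟫ = ⟪(V.orthogonalProjectionOnto u : E), a⟫ := by rw [← hadef]
        _ = ⟪u, (V.orthogonalProjectionOnto a : E)⟫ := hadj u a
        _ = ⟪u, a⟫ := by rw [hPa]
    linarith
  exact inner_self_eq_zero.mp (le_antisymm haa real_inner_self_nonneg)

end Endgame
/-- Every element of a compact semisimple real Lie algebra can be moved into the orthogonal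
complement of any given Cartan subalgebra by a Lie algebra automorphism. -/
theorem orbit_meets_orthogonal_complement (L : Type*) [LieRing L] [LieAlgebra ℝ L]
    [FiniteDimensional ℝ L]
    (hneg : ∀ x : L, x ≠ 0 → killingForm ℝ L x x < 0)
    (C : LieSubalgebra ℝ L) (hC : C.IsCartanSubalgebra) :
    ∀ x : L, ∃ g : L ≃ₗ⁅ℝ⁆ L, ∀ c ∈ C, killingForm ℝ L (g x) c = 0 := by
  classical
  have hsymm : ∀ v w : L, killingForm ℝ L v w = killingForm ℝ L w v :=
    fun v w => LieModule.traceForm_comm ℝ L L v w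
  let core : InnerProductSpace.Core ℝ L :=
  { inner := fun v w => - killingForm ℝ L v w
    conj_inner_symm := by
      intro v w
      show (starRingEnd ℝ) (- killingForm ℝ L w v) = - killingForm ℝ L v w
      rw [hsymm w v]
      simp
    re_inner_nonneg := by
      intro v
      show (0:ℝ) ≤ RCLike.re (- killingForm ℝ L v v)
      rcases eq_or_ne v 0 with rfl | hv
      · simp
      · have := hneg v hv
        simp only [RCLike.re_to_real]
        linarith
    definite := by
      intro v hv
      by_contra h
      have h1 := hneg v h
      have h2 : - killingForm ℝ L v v = 0 := hv
      linarith
    add_left := by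
      intro p q r
      show - killingForm ℝ L (p + q) r = - killingForm ℝ L p r + - killingForm ℝ L q r
      rw [map_add, LinearMap.add_apply]
      ring
    smul_left := by
      intro p q r
      show - killingForm ℝ L (r • p) q = (starRingEnd ℝ) r * (- killingForm ℝ L p q)
      rw [map_smul, LinearMap.smul_apply]
      simp }
  letI : NormedAddCommGroup L := core.toNormedAddCommGroup
  letI : InnerProductSpace ℝ L := InnerProductSpace.ofCore core.toCore
  have hκ : ∀ v w : L, ⟪v, w⟫ = - killingForm ℝ L v w := fun v w => rfl
  haveI : LieRing.IsNilpotent C := hC.nilpotent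
  intro x
  set V : Submodule ℝ L := (C : Submodule ℝ L) with hVdef
  let B : L →ₗ[ℝ] L →ₗ[ℝ] L :=
    { toFun := fun v => LieAlgebra.ad ℝ L v
      map_add' := fun p q => by ext w; simp
      map_smul' := fun t p => by ext w; simp }
  have hB : ∀ v w : L, B v w = ⁅v, w⁆ := fun v w => rfl
  have halt : ∀ v w : L, B v w = - B w v := by
    intro v w
    rw [hB, hB, ← lie_skew]
  have hder : ∀ z v w : L, B z (B v w) = B (B z v) w + B v (B z w) := by
    intro z v w
    simp only [hB]
    exact leibniz_lie z v w
  have htr : ∀ p q : L, ⟪p, q⟫ = - LinearMap.trace ℝ L ((B p) ∘ₗ (B q)) := by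
    intro p q
    rw [hκ, killingForm_apply_apply]
    rfl
  have hskew : ∀ z v w : L, ⟪B z v, w⟫ = -⟪v, B z w⟫ := by
    intro z v w
    rw [hB, hB, hκ, hκ, neg_neg, ← lie_skew z v, map_neg, LinearMap.neg_apply, neg_neg,
      LieModule.traceForm_apply_lie_apply]
  have habV : ∀ v ∈ V, ∀ w ∈ V, B v w = 0 := by
    intro v hv w hw
    rw [hVdef, LieSubalgebra.mem_toSubmodule] at hv hw
    rw [hB]
    obtain ⟨k, hk⟩ := LieAlgebra.nilpotent_ad_of_nilpotent_algebra (R := ℝ) (L := C)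
    have key : ∀ n : ℕ, ∀ c : C,
        ((((LieAlgebra.ad ℝ C) ⟨v, hv⟩ ^ n) c : C) : L)
          = ((LieAlgebra.ad ℝ L v) ^ n) (c : L) := by
      intro n
      induction n with
      | zero => intro c; simp
      | succ n ih =>
        intro c
        rw [pow_succ, pow_succ, Module.End.mul_apply, Module.End.mul_apply, ih]
        congr 1
    have h0 : ((LieAlgebra.ad ℝ L v) ^ k) w = 0 := by
      have h1 := key k ⟨w, hw⟩
      rw [hk ⟨v, hv⟩] at h1
      simpa using h1.symm
    have h2 := skew_nilp_apply (LieAlgebra.ad ℝ L v) (fun p q => hskew v p q) h0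
    simpa using h2
  obtain ⟨f₀, hiso, hmul, hfirst, hsecond⟩ := exists_min_conditions B hskew hder V x
  have hP0 := endgame B hskew halt hder htr V habV (f₀ x) hfirst hsecond
  have hinj : Function.Injective f₀ := by
    intro p q hpq
    have h1 : f₀ (p - q) = 0 := by rw [map_sub, hpq, sub_self]
    have h2 : ⟪p - q, p - q⟫ = (0:ℝ) := by rw [← hiso (p - q) (p - q), h1, inner_zero_left]
    exact sub_eq_zero.mp (inner_self_eq_zero.mp h2)
  have hinj' : Function.Injective (f₀ : L →ₗ[ℝ] L) := hinj
  have hsurj : Function.Surjective (f₀ : L →ₗ[ℝ] L) :=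
    (LinearMap.injective_iff_surjective_of_finrank_eq_finrank rfl).mp hinj'
  let e : L ≃ₗ[ℝ] L := LinearEquiv.ofBijective (f₀ : L →ₗ[ℝ] L) ⟨hinj', hsurj⟩
  refine ⟨{ toLinearMap := (f₀ : L →ₗ[ℝ] L)
            map_lie' := by intro p q; simpa [hB] using hmul p q
            invFun := e.symm
            left_inv := e.left_inv
            right_inv := e.right_inv }, ?_⟩
  intro c hc
  show killingForm ℝ L (f₀ x) c = 0
  have horth : f₀ x ∈ Vᗮ := by
    have h8 : f₀ x - (V.orthogonalProjectionOnto (f₀ x) : L) ∈ Vᗮ :=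
        Submodule.sub_starProjection_mem_orthogonal (K := V) (f₀ x)
    rwa [hP0, sub_zero] at h8
  have h9 : ⟪c, f₀ x⟫ = 0 :=
    (Submodule.mem_orthogonal _ _).mp horth c
      (by rw [hVdef, LieSubalgebra.mem_toSubmodule]; exact hc)
  rw [hsymm]
  have h10 := hκ c (f₀ x)
  rw [h9] at h10
  linarith
end

section
/- Let K be a field of characteristic 0, let L be a finite-dimensional Lie algebra over K with nondegenerate Killing form, let S be a Lie subalgebra of L whose own Killing form κ_S is nondegenerate (a semisimple subalgebra), and let C be a Cartan subalgebra of S. If s ∈ S satisfies κ_S(s, c) = 0 for all c ∈ C, then κ_L(s, c) = 0 for all c ∈ C, where κ_L is the Killing form of L. In other words, the orthogonal space of C in S with respect to κ_S is contained in the orthogonal space of C in L with respect to κ_L. -/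
/-- If `S` is a semisimple Lie subalgebra of a semisimple Lie algebra `L` (char 0) and `C` is a
Cartan subalgebra of `S`, then the orthogonal space of `C` in `S` (w.r.t. the Killing form of
`S`) is contained in the orthogonal space of `C` in `L` (w.r.t. the Killing form of `L`). -/
theorem orthogonal_in_subalgebra_subset (K L : Type*) [Field K] [CharZero K]
    [LieRing L] [LieAlgebra K L] [FiniteDimensional K L]
    (hL : (killingForm K L).Nondegenerate)
    (S : LieSubalgebra K L) (hS : (killingForm K S).Nondegenerate)
    (C : LieSubalgebra K S) (hC : C.IsCartanSubalgebra)
    (s : S) (hs : ∀ c ∈ C, killingForm K S s c = 0) :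
    ∀ c ∈ C, killingForm K L (s : L) ((c : S) : L) = 0 := by
  haveI := hC
  haveI : FiniteDimensional K S := inferInstance
  haveI : LieAlgebra.IsKilling K S := by
    constructor
    rw [eq_bot_iff]
    intro x hx
    have hx' : x ∈ (LieIdeal.killingCompl K S ⊤ : Submodule K S) := hx
    rw [LieIdeal.coe_killingCompl_top,
      LinearMap.BilinForm.nondegenerate_iff_ker_eq_bot.mp hS] at hx'
    simpa using hx'
  -- Fitting decomposition of `S` as a `C`-module.
  have hdec := (LieModule.isCompl_genWeightSpace_zero_posFittingComp K C S).codisjoint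
  rw [codisjoint_iff, ← LieSubmodule.toSubmodule_inj,
    LieSubmodule.sup_toSubmodule, LieSubmodule.top_toSubmodule] at hdec
  have hmem : (s : S) ∈ (LieModule.genWeightSpace S (0 : C → K) : Submodule K S) ⊔
      (LieModule.posFittingComp K C S : Submodule K S) := hdec ▸ Submodule.mem_top
  obtain ⟨s₀, hs₀, s₁, hs₁, hsum⟩ := Submodule.mem_sup.mp hmem
  -- `s₀ ∈ C` since `C` is Cartan.
  have hzero : s₀ ∈ LieAlgebra.zeroRootSubalgebra K S C := by
    rwa [LieAlgebra.zeroRootSubalgebra, LieSubalgebra.mem_mk_iff]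
  have hs₀C : s₀ ∈ C := by
    rwa [LieAlgebra.zeroRootSubalgebra_eq_of_is_cartan K S C] at hzero
  -- `s₁` is Killing-orthogonal (in `S`) to all of `C`.
  have horth : ∀ c ∈ C, killingForm K S s₁ c = 0 := by
    intro c hc
    rw [LieModule.traceForm_comm]
    exact killingForm_eq_zero_of_mem_zeroRoot_mem_posFitting K S C
      (LieAlgebra.le_zeroRootSubalgebra K S C hc) hs₁
  -- hence so is `s₀`, so `s₀ = 0` by nondegeneracy of the trace form on the Cartan.
  have hs₀0 : s₀ = 0 := by
    have hnd := LieAlgebra.IsKilling.traceForm_cartan_nondegenerate K S C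
    have : (⟨s₀, hs₀C⟩ : C) = 0 := by
      apply hnd.1
      rintro ⟨c, hc⟩
      have : killingForm K S s₀ c = 0 := by
        have h1 := hs c hc
        have h2 := horth c hc
        rw [← hsum] at h1
        simpa [h2] using h1
      simp only [← LieAlgebra.restrict_killingForm]
      exact this
    simpa using congrArg Subtype.val this
  have hs1 : (s : S) = s₁ := by rw [← hsum, hs₀0, zero_add]
  -- Move everything into `L` via the inclusion `S → L`, a `C`-module map.
  let f : S →ₗ⁅K,C⁆ L :=
    { toLinearMap := (S : Submodule K L).subtype
      map_lie' := fun {x m} => rfl }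
  have hsL : (s : L) ∈ LieModule.posFittingComp K C L := by
    apply LieModule.map_posFittingComp_le f
    exact ⟨s, by rwa [← hs1] at hs₁, rfl⟩
  intro c hc
  have hcL : ((c : S) : L) ∈ LieModule.genWeightSpace L (0 : C → K) := by
    apply LieModule.map_genWeightSpace_le f
    refine ⟨(c : S), ?_, rfl⟩
    have := LieAlgebra.le_zeroRootSubalgebra K S C hc
    rwa [LieAlgebra.zeroRootSubalgebra, LieSubalgebra.mem_mk_iff] at this
  rw [LieModule.traceForm_comm]
  exact LieModule.eq_zero_of_mem_genWeightSpace_mem_posFitting K C L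
    (fun x y z => LieModule.traceForm_apply_lie_apply' K L L (x : L) y z) hcL hsL
end

section
/- Let V be a finite-dimensional real inner product space of dimension n, and let v₁, …, vₙ be a basis of V. For each i, let rᵢ : V → V be the orthogonal reflection across the hyperplane (ℝ·vᵢ)ᗮ orthogonal to vᵢ. Then the composition r₁ ∘ r₂ ∘ ⋯ ∘ rₙ has no fixed vector other than 0: if (r₁ ∘ ⋯ ∘ rₙ)(v) = v then v = 0. (In particular, any Coxeter transformation of a finite Weyl group, i.e. a product of the reflections in all the simple roots in any order, has no nonzero fixed vector, so 1 is not an eigenvalue.) -/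
open scoped RealInnerProductSpace

lemma coxeter_aux_span (V : Type*) [NormedAddCommGroup V] [InnerProductSpace ℝ V]
    (n : ℕ) (v : Module.Basis (Fin n) ℝ V) (r : Fin n → V → V)
    (hr : ∀ i x, r i x = x - (2 * ⟪x, v i⟫ / ⟪v i, v i⟫) • v i) :
    ∀ (L : List (Fin n)) (x : V),
      x - (L.map r).foldr (· ∘ ·) id x ∈ Submodule.span ℝ (v '' {j | j ∈ L}) := by
  intro L
  induction L with
  | nil => intro x; simp
  | cons i T ih =>
    intro x
    have h1 : ((i :: T).map r).foldr (· ∘ ·) id x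
        = r i (((T.map r).foldr (· ∘ ·) id) x) := rfl
    set y := ((T.map r).foldr (· ∘ ·) id) x with hy
    have h2 : x - r i y = (x - y) + (2 * ⟪y, v i⟫ / ⟪v i, v i⟫) • v i := by
      rw [hr]; abel
    rw [h1, h2]
    refine Submodule.add_mem _ ?_ ?_
    · refine Submodule.span_mono (Set.image_mono (f := v) ?_) (ih x)
      intro z hz
      exact List.mem_cons_of_mem i hz
    · exact Submodule.smul_mem _ _ (Submodule.subset_span ⟨i, by simp, rfl⟩)

lemma coxeter_aux_fix (V : Type*) [NormedAddCommGroup V] [InnerProductSpace ℝ V]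
    (n : ℕ) (v : Module.Basis (Fin n) ℝ V) (r : Fin n → V → V)
    (hr : ∀ i x, r i x = x - (2 * ⟪x, v i⟫ / ⟪v i, v i⟫) • v i) :
    ∀ (L : List (Fin n)), L.Nodup → ∀ w : V,
      (L.map r).foldr (· ∘ ·) id w = w → ∀ i ∈ L, ⟪w, v i⟫ = 0 := by
  intro L
  induction L with
  | nil => simp
  | cons i T ih =>
    intro hnd w hw j hj
    have hi : i ∉ T := (List.nodup_cons.mp hnd).1
    have hndT : T.Nodup := (List.nodup_cons.mp hnd).2
    set u := (T.map r).foldr (· ∘ ·) id w with hu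
    have hru : r i u = w := hw
    have hvne : ⟪v i, v i⟫ ≠ 0 := by
      simpa [inner_self_eq_zero] using v.ne_zero i
    set c := 2 * ⟪u, v i⟫ / ⟪v i, v i⟫ with hc
    have hcv : u - w = c • v i := by
      rw [← hru, hr]; abel
    have hmem : c • v i ∈ Submodule.span ℝ (v '' {j | j ∈ T}) := by
      have h := coxeter_aux_span V n v r hr T w
      rw [← hu] at h
      rw [← hcv]
      simpa using Submodule.neg_mem _ h
    have hc0 : c = 0 := by
      by_contra hc0
      have : v i ∈ Submodule.span ℝ (v '' {j | j ∈ T}) := by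
        have := Submodule.smul_mem _ c⁻¹ hmem
        rwa [smul_smul, inv_mul_cancel₀ hc0, one_smul] at this
      exact v.linearIndependent.notMem_span_image (by simpa using hi) this
    have hinner : ⟪u, v i⟫ = 0 := by
      have : 2 * ⟪u, v i⟫ = 0 := by
        rw [hc, div_eq_zero_iff] at hc0
        tauto
      linarith
    have hwu : w = u := by
      rw [← hru, hr, hinner]
      simp
    have hfixT : (T.map r).foldr (· ∘ ·) id w = w := by
      rw [hwu]; exact hu.symm ▸ (by rw [hwu] at hu; exact hu.symm)
    rcases List.mem_cons.mp hj with rfl | hjT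
    · rw [hwu]; exact hinner
    · exact ih hndT w hfixT j hjT

/-- A product of the orthogonal reflections in the hyperplanes orthogonal to the members of a
basis of a finite-dimensional real inner product space (a "Coxeter transformation") has no
fixed vector other than `0`. -/
theorem coxeter_no_fixed_vector (V : Type*) [NormedAddCommGroup V] [InnerProductSpace ℝ V]
    (n : ℕ) (hdim : Module.finrank ℝ V = n) (v : Module.Basis (Fin n) ℝ V)
    (r : Fin n → V → V)
    (hr : ∀ i x, r i x = x - (2 * ⟪x, v i⟫ / ⟪v i, v i⟫) • v i) :
    ∀ w : V, ((List.ofFn r).foldr (· ∘ ·) id) w = w → w = 0 := by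
  intro w hw
  have hofn : List.ofFn r = (List.finRange n).map r := List.ofFn_eq_map
  rw [hofn] at hw
  have hinner : ∀ i, ⟪w, v i⟫ = 0 := fun i =>
    coxeter_aux_fix V n v r hr (List.finRange n) (List.nodup_finRange n) w hw i
      (List.mem_finRange i)
  have hw0 : w ∈ Submodule.span ℝ (Set.range v) := by rw [v.span_eq]; trivial
  have key : ∀ x ∈ Submodule.span ℝ (Set.range v), ⟪w, x⟫ = 0 := by
    intro x hx
    induction hx using Submodule.span_induction with
    | mem x hx => obtain ⟨i, rfl⟩ := hx; exact hinner i
    | zero => simp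
    | add x y _ _ hx hy => rw [inner_add_right, hx, hy, add_zero]
    | smul a x _ hx => rw [real_inner_smul_right, hx, mul_zero]
  exact inner_self_eq_zero.mp (key w hw0)
end

section
/- Fix n ≥ 2 and let S be the set of n × n complex matrices A that are circulant (A = Matrix.circulant v for some v : Fin n → ℂ), skew-Hermitian (Aᴴ = −A), and trace-zero. Then: (a) S is a real subspace of the n × n complex matrices of real dimension n − 1; (b) any two elements of S commute, i.e. A·B = B·A for all A, B ∈ S; (c) S is orthogonal to the diagonal Cartan subalgebra of 𝔰𝔲(n) with respect to the trace form: for every A ∈ S and every diagonal skew-Hermitian trace-zero matrix D, trace(A·D) = 0. (Consequently S and the diagonal trace-zero skew-Hermitian matrices are two orthogonal Cartan subalgebras of 𝔰𝔲(n) with respect to minus its Killing form.) -/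
open Matrix Module

section aux

variable (n : ℕ) [NeZero n]

/-- circulant as a real-linear map -/
noncomputable def circLin : (Fin n → ℂ) →ₗ[ℝ] Matrix (Fin n) (Fin n) ℂ where
  toFun v := Matrix.circulant v
  map_add' v w := Matrix.circulant_add v w
  map_smul' r v := Matrix.circulant_smul r v

/-- skew part -/
noncomputable def Psub : Submodule ℝ (Fin n → ℂ) where
  carrier := {v | ∀ k, star (v k) = -v (-k)}
  zero_mem' := by simp
  add_mem' := by
    intro a b ha hb k
    simp only [Pi.add_apply, star_add, ha k, hb k]
    ring
  smul_mem' := by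
    intro r v hv k
    simp only [Pi.smul_apply, star_smul, star_trivial, hv k, smul_neg]

/-- hermitian part -/
noncomputable def Qsub : Submodule ℝ (Fin n → ℂ) where
  carrier := {v | ∀ k, star (v k) = v (-k)}
  zero_mem' := by simp
  add_mem' := by
    intro a b ha hb k
    simp only [Pi.add_apply, star_add, ha k, hb k]
  smul_mem' := by
    intro r v hv k
    simp only [Pi.smul_apply, star_smul, star_trivial, hv k]

/-- multiplication by I as a real-linear equivalence -/
noncomputable def mulI : (Fin n → ℂ) ≃ₗ[ℝ] (Fin n → ℂ) where
  toFun v := Complex.I • v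
  invFun v := (-Complex.I) • v
  map_add' v w := smul_add _ v w
  map_smul' r v := smul_comm _ r v
  left_inv v := by
    simp [smul_smul, Complex.I_mul_I]
  right_inv v := by
    simp [smul_smul, Complex.I_mul_I]

lemma Qsub_eq_map : Qsub n = (Psub n).map (mulI n : (Fin n → ℂ) →ₗ[ℝ] (Fin n → ℂ)) := by
  ext v
  simp only [Submodule.mem_map]
  constructor
  · intro hv
    refine ⟨(-Complex.I) • v, fun k => ?_, ?_⟩
    · simp only [Pi.smul_apply, smul_eq_mul, star_mul', star_neg, Complex.star_def,
        Complex.conj_I, hv k]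
      ring
    · show Complex.I • (-Complex.I) • v = v
      simp [smul_smul, Complex.I_mul_I]
  · rintro ⟨w, hw, rfl⟩
    intro k
    simp only [mulI, LinearEquiv.coe_mk, LinearMap.coe_mk, AddHom.coe_mk,
      Pi.smul_apply, smul_eq_mul, star_mul', Complex.star_def, Complex.conj_I, hw k]
    ring

lemma Psub_inf_Qsub : Psub n ⊓ Qsub n = ⊥ := by
  rw [Submodule.eq_bot_iff]
  rintro v ⟨h1, h2⟩
  funext k
  have h := (h1 (-k)).symm.trans (h2 (-k))
  simp only [neg_neg] at h
  have : (2 : ℂ) * v k = 0 := by linear_combination -h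
  simpa using this

lemma Psub_sup_Qsub : Psub n ⊔ Qsub n = ⊤ := by
  rw [eq_top_iff]
  intro v _
  refine Submodule.mem_sup.2 ⟨fun k => (1/2 : ℂ) * (v k - star (v (-k))),
    fun k => ?_, fun k => (1/2 : ℂ) * (v k + star (v (-k))), fun k => ?_, ?_⟩
  · simp only [star_mul', star_sub, star_star, neg_neg]
    have : star ((1:ℂ)/2) = 1/2 := by simp
    rw [this]; ring
  · simp only [star_mul', star_add, star_star, neg_neg]
    have : star ((1:ℂ)/2) = 1/2 := by simp
    rw [this]; ring
  · funext k
    simp only [Pi.add_apply]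
    ring

lemma finrank_Psub : finrank ℝ (Psub n) = n := by
  have htot : finrank ℝ (Fin n → ℂ) = 2 * n := by
    rw [Module.finrank_pi_fintype]
    simp [Complex.finrank_real_complex, mul_comm]
  have h1 : finrank ℝ (Qsub n) = finrank ℝ (Psub n) := by
    rw [Qsub_eq_map]
    exact LinearEquiv.finrank_map_eq _ _
  have h2 := Submodule.finrank_sup_add_finrank_inf_eq (Psub n) (Qsub n)
  rw [Psub_sup_Qsub, Psub_inf_Qsub, finrank_top, htot, finrank_bot, h1] at h2
  omega

end aux

section aux2

variable (n : ℕ) [NeZero n]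

/-- imaginary part of 0-th coordinate, on Psub -/
noncomputable def fLin : (Psub n) →ₗ[ℝ] ℝ :=
  Complex.imLm.comp ((LinearMap.proj (0 : Fin n)).comp (Psub n).subtype)

lemma fLin_surjective : Function.Surjective (fLin n) := by
  intro r
  refine ⟨⟨fun _ => (r : ℂ) * Complex.I, fun k => ?_⟩, ?_⟩
  · simp [Complex.ext_iff]
  · simp [fLin]

lemma finrank_ker_fLin : finrank ℝ (LinearMap.ker (fLin n)) = n - 1 := by
  haveI : FiniteDimensional ℝ (Psub n) := inferInstance
  have h := LinearMap.finrank_range_add_finrank_ker (fLin n)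
  rw [LinearMap.range_eq_top.2 (fLin_surjective n), finrank_top, finrank_Psub] at h
  simp only [Module.finrank_self] at h
  omega

/-- the vector space of coefficient vectors -/
noncomputable def Vsub : Submodule ℝ (Fin n → ℂ) :=
  (LinearMap.ker (fLin n)).map (Psub n).subtype

lemma finrank_Vsub : finrank ℝ (Vsub n) = n - 1 := by
  rw [Vsub, ← finrank_ker_fLin n]
  exact (LinearEquiv.finrank_eq
    (Submodule.equivMapOfInjective _ (Psub n).injective_subtype _)).symm

lemma mem_Vsub_iff (v : Fin n → ℂ) :
    v ∈ Vsub n ↔ (∀ k, star (v k) = -v (-k)) ∧ v 0 = 0 := by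
  constructor
  · rintro ⟨⟨w, hw⟩, hker, rfl⟩
    refine ⟨hw, ?_⟩
    have him : (w 0).im = 0 := by
      simpa [fLin] using hker
    have hre : (w 0).re = 0 := by
      have := hw 0
      rw [neg_zero] at this
      have := congrArg Complex.re this
      simp only [Complex.star_def, Complex.conj_re, Complex.neg_re] at this
      linarith
    exact Complex.ext hre him
  · rintro ⟨h1, h2⟩
    exact ⟨⟨v, h1⟩, by simp [fLin, LinearMap.mem_ker, h2], rfl⟩

end aux2

lemma trace_circulant (n : ℕ) [NeZero n] (v : Fin n → ℂ) :
    (Matrix.circulant v).trace = (n : ℂ) * v 0 := by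
  cases n with
  | zero => exact absurd rfl (NeZero.ne 0)
  | succ m =>
    simp only [Matrix.trace, Matrix.diag, Matrix.circulant_apply, sub_self]
    rw [Finset.sum_const, Finset.card_univ, Fintype.card_fin, nsmul_eq_mul]

/-- The set of circulant, skew-Hermitian, trace-zero `n × n` complex matrices is a real
subspace of dimension `n - 1`, is commutative, and is trace-orthogonal to the diagonal Cartan
subalgebra of `𝔰𝔲(n)`. -/
theorem circulant_orthogonal_cartan_su (n : ℕ) (hn : 2 ≤ n)
    (S : Set (Matrix (Fin n) (Fin n) ℂ))
    (hS : S = {A : Matrix (Fin n) (Fin n) ℂ |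
      (∃ v : Fin n → ℂ, A = Matrix.circulant v) ∧ Aᴴ = -A ∧ A.trace = 0}) :
    (∃ W : Submodule ℝ (Matrix (Fin n) (Fin n) ℂ),
      (W : Set (Matrix (Fin n) (Fin n) ℂ)) = S ∧ Module.finrank ℝ W = n - 1) ∧
    (∀ A ∈ S, ∀ B ∈ S, A * B = B * A) ∧
    (∀ A ∈ S, ∀ D : Matrix (Fin n) (Fin n) ℂ,
      D.IsDiag → Dᴴ = -D → D.trace = 0 → (A * D).trace = 0) := by
  haveI : NeZero n := ⟨by omega⟩
  have hn0 : (n : ℂ) ≠ 0 := Nat.cast_ne_zero.2 (by omega)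
  -- characterization of S
  have hchar : ∀ A, A ∈ S ↔ ∃ v ∈ Vsub n, Matrix.circulant v = A := by
    intro A
    rw [hS]
    constructor
    · rintro ⟨⟨v, rfl⟩, hskew, htr⟩
      refine ⟨v, (mem_Vsub_iff n v).2 ⟨?_, ?_⟩, rfl⟩
      · have h := hskew
        rw [Fin.conjTranspose_circulant, ← Matrix.circulant_neg] at h
        have h2 := Fin.circulant_injective n h
        intro k
        have := congrFun h2 (-k)
        simpa [neg_neg] using this
      · rw [trace_circulant] at htr
        exact (mul_eq_zero.1 htr).resolve_left hn0
    · rintro ⟨v, hv, rfl⟩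
      obtain ⟨h1, h2⟩ := (mem_Vsub_iff n v).1 hv
      refine ⟨⟨v, rfl⟩, ?_, ?_⟩
      · rw [Fin.conjTranspose_circulant, ← Matrix.circulant_neg]
        exact congrArg Matrix.circulant
          (funext fun k => by simpa [neg_neg] using h1 (-k))
      · rw [trace_circulant, h2, mul_zero]
  refine ⟨⟨(Vsub n).map (circLin n), ?_, ?_⟩, ?_, ?_⟩
  · ext A
    rw [hchar A]
    simp only [SetLike.mem_coe, Submodule.mem_map]
    rfl
  · rw [← finrank_Vsub n]
    exact (LinearEquiv.finrank_eq
      (Submodule.equivMapOfInjective _ (Fin.circulant_injective n) _)).symm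
  · intro A hA B hB
    obtain ⟨v, _, rfl⟩ := (hchar A).1 hA
    obtain ⟨w, _, rfl⟩ := (hchar B).1 hB
    exact Fin.circulant_mul_comm v w
  · intro A hA D hdiag _ _
    obtain ⟨v, hv, rfl⟩ := (hchar A).1 hA
    obtain ⟨-, hv0⟩ := (mem_Vsub_iff n v).1 hv
    have hzero : ∀ i, (Matrix.circulant v * D) i i = 0 := by
      intro i
      rw [Matrix.mul_apply]
      apply Finset.sum_eq_zero
      intro j _
      by_cases h : j = i
      · subst h
        simp [Matrix.circulant_apply, sub_self, hv0]
      · rw [hdiag h, mul_zero]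
    simp [Matrix.trace, Matrix.diag, hzero]
end

section
/- In the 6 × 6 real matrices, let A = !![0,-1,0; 1,0,0; 0,0,0], B = !![0,0,0; 0,0,0; 1,0,0], C = !![0,0,0; 0,0,-1; 0,1,0] (each 3 × 3), and set x₁ = the block matrix [[A, 0₃],[0₃, 0₃]], x₂ = [[0₃, B],[−Bᵀ, 0₃]], x₃ = [[0₃, 0₃],[0₃, C]]. Let C₆ be the set of block matrices [[0₃, Λ],[−Λ, 0₃]] with Λ a real 3 × 3 diagonal matrix. Then x₁, x₂, x₃ are skew-symmetric, linearly independent over ℝ, mutually commute (xᵢ·xⱼ = xⱼ·xᵢ for all i, j), and trace(xᵢ·y) = 0 for each i and every y ∈ C₆. (Consequently the real span of {x₁, x₂, x₃} is a Cartan subalgebra of 𝔰𝔬(6) orthogonal to the Cartan subalgebra C₆ with respect to minus the Killing form.) -/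
open Matrix

/-- The explicit block matrices `x₁`, `x₂`, `x₃` span a Cartan subalgebra of `𝔰𝔬(6)`
orthogonal to the standard Cartan subalgebra `C₆`. -/
theorem so6_orthogonal_cartan
    (A B C : Matrix (Fin 3) (Fin 3) ℝ)
    (hA : A = !![0,-1,0; 1,0,0; 0,0,0])
    (hB : B = !![0,0,0; 0,0,0; 1,0,0])
    (hC : C = !![0,0,0; 0,0,-1; 0,1,0])
    (x₁ x₂ x₃ : Matrix (Fin 3 ⊕ Fin 3) (Fin 3 ⊕ Fin 3) ℝ)
    (hx₁ : x₁ = Matrix.fromBlocks A 0 0 0)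
    (hx₂ : x₂ = Matrix.fromBlocks 0 B (-Bᵀ) 0)
    (hx₃ : x₃ = Matrix.fromBlocks 0 0 0 C)
    (C₆ : Set (Matrix (Fin 3 ⊕ Fin 3) (Fin 3 ⊕ Fin 3) ℝ))
    (hC₆ : C₆ = {y : Matrix (Fin 3 ⊕ Fin 3) (Fin 3 ⊕ Fin 3) ℝ | ∃ d : Fin 3 → ℝ,
      y = Matrix.fromBlocks 0 (Matrix.diagonal d) (-(Matrix.diagonal d)) 0}) :
    (x₁ᵀ = -x₁ ∧ x₂ᵀ = -x₂ ∧ x₃ᵀ = -x₃) ∧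
    LinearIndependent ℝ ![x₁, x₂, x₃] ∧
    (x₁ * x₂ = x₂ * x₁ ∧ x₁ * x₃ = x₃ * x₁ ∧ x₂ * x₃ = x₃ * x₂) ∧
    (∀ y ∈ C₆, (x₁ * y).trace = 0 ∧ (x₂ * y).trace = 0 ∧ (x₃ * y).trace = 0) := by
  have hAT : Aᵀ = -A := by subst hA; ext i j; fin_cases i <;> fin_cases j <;>
    norm_num [Matrix.vecHead, Matrix.vecTail, Matrix.transpose_apply, Matrix.neg_apply]
  have hCT : Cᵀ = -C := by subst hC; ext i j; fin_cases i <;> fin_cases j <;>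
    norm_num [Matrix.vecHead, Matrix.vecTail, Matrix.transpose_apply, Matrix.neg_apply]
  have hAB : A * B = 0 := by subst hA hB; ext i j; fin_cases i <;> fin_cases j <;>
    norm_num [Matrix.mul_apply, Fin.sum_univ_three, Matrix.vecHead, Matrix.vecTail, Matrix.cons_val_two]
  have hBA : Bᵀ * A = 0 := by subst hA hB; ext i j; fin_cases i <;> fin_cases j <;>
    norm_num [Matrix.mul_apply, Fin.sum_univ_three, Matrix.vecHead, Matrix.vecTail,
      Matrix.transpose_apply, Matrix.cons_val_two]
  have hBC : B * C = 0 := by subst hB hC; ext i j; fin_cases i <;> fin_cases j <;>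
    norm_num [Matrix.mul_apply, Fin.sum_univ_three, Matrix.vecHead, Matrix.vecTail, Matrix.cons_val_two]
  have hCB : C * Bᵀ = 0 := by subst hB hC; ext i j; fin_cases i <;> fin_cases j <;>
    norm_num [Matrix.mul_apply, Fin.sum_univ_three, Matrix.vecHead, Matrix.vecTail,
      Matrix.transpose_apply, Matrix.cons_val_two]
  have hBD : ∀ d : Fin 3 → ℝ, (B * Matrix.diagonal d).trace = 0 := by
    intro d
    subst hB
    simp [Matrix.trace, Matrix.diag, Matrix.mul_diagonal, Fin.sum_univ_three,
      Matrix.vecHead, Matrix.vecTail]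
  have hBTD : ∀ d : Fin 3 → ℝ, (Bᵀ * Matrix.diagonal d).trace = 0 := by
    intro d
    subst hB
    simp [Matrix.trace, Matrix.diag, Matrix.mul_diagonal, Fin.sum_univ_three,
      Matrix.vecHead, Matrix.vecTail, Matrix.transpose_apply]
  subst hx₁ hx₂ hx₃ hC₆
  refine ⟨⟨?_, ?_, ?_⟩, ?_, ⟨?_, ?_, ?_⟩, ?_⟩
  · simp [fromBlocks_transpose, hAT, fromBlocks_neg]
  · simp [fromBlocks_transpose, fromBlocks_neg]
  · simp [fromBlocks_transpose, hCT, fromBlocks_neg]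
  · rw [Fintype.linearIndependent_iff]
    intro g hg
    have h0 := congrFun (congrFun hg (Sum.inl 1)) (Sum.inl 0)
    have h1 := congrFun (congrFun hg (Sum.inl 2)) (Sum.inr 0)
    have h2 := congrFun (congrFun hg (Sum.inr 2)) (Sum.inr 1)
    simp [Fin.sum_univ_three, hA, hB, hC, Matrix.fromBlocks, Matrix.vecHead,
      Matrix.vecTail] at h0 h1 h2
    intro i
    fin_cases i <;> simp_all
  · rw [fromBlocks_multiply, fromBlocks_multiply]
    simp [hAB, hBA, Matrix.neg_mul]
  · rw [fromBlocks_multiply, fromBlocks_multiply]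
    simp
  · rw [fromBlocks_multiply, fromBlocks_multiply]
    simp [hBC, hCB, Matrix.neg_mul, Matrix.mul_neg]
  · rintro y ⟨d, rfl⟩
    refine ⟨?_, ?_, ?_⟩ <;>
      rw [fromBlocks_multiply] <;>
      simp [Matrix.trace, Matrix.diag, Fintype.sum_sum_type, Matrix.fromBlocks,
        hBD, hBTD, Matrix.mul_neg, Matrix.neg_mul];
      simpa [Matrix.trace, Matrix.diag] using hBD d
end
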